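/- Let Q be a (d+1)-dimensional polytope in ℝ^{d+1}, let π_d : ℝ^{d+1} → ℝ^d be the projection forgetting the last coordinate, and let F be a proper face of Q with F_1, …, F_k the facets of Q containing F. Then F is strictly preserved by π_d if and only if among F_1, …, F_k there is at least one upper facet and at least one lower facet; and F is preserved but not strictly preserved by π_d if and only if all of F_1, …, F_k are vertical. -/

import Mathlib

open Set

noncomputable section

/-- A polytope: the convex hull of a finite set of points. -/
def IsPolytope {N : ℕ} (P : Set (Fin N → ℝ)) : Prop :=
  ∃ S : Finset (Fin N → ℝ), P = convexHull ℝ (S : Set (Fin N → ℝ))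

/-- Dimension of a set: the dimension of its affine hull (with `-1` for the empty set). -/
def pdim {N : ℕ} (P : Set (Fin N → ℝ)) : ℤ :=
  haveI := Classical.dec P.Nonempty
  if P.Nonempty then (Module.finrank ℝ (affineSpan ℝ P).direction : ℤ) else -1

/-- `F` is a face of `P`: the subset of `P` where some linear functional bounded above on `P`
attains its maximum value.  This includes `∅` and `P` itself. -/
def IsFaceOf {N : ℕ} (F P : Set (Fin N → ℝ)) : Prop :=
  ∃ (c : Fin N → ℝ) (b : ℝ),
    (∀ x ∈ P, ∑ i, c i * x i ≤ b) ∧ F = {x ∈ P | ∑ i, c i * x i = b}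

/-- A facet: a face of dimension one less than the polytope. -/
def IsFacetOf {N : ℕ} (F P : Set (Fin N → ℝ)) : Prop :=
  IsFaceOf F P ∧ pdim F + 1 = pdim P

/-- A ridge: a face of dimension two less than the polytope. -/
def IsRidgeOf {N : ℕ} (F P : Set (Fin N → ℝ)) : Prop :=
  IsFaceOf F P ∧ pdim F + 2 = pdim P

def IsVertexOf {N : ℕ} (v : Fin N → ℝ) (P : Set (Fin N → ℝ)) : Prop :=
  IsFaceOf {v} P

def vertexSet {N : ℕ} (P : Set (Fin N → ℝ)) : Set (Fin N → ℝ) :=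
  {v | IsVertexOf v P}

def vertexCount {N : ℕ} (P : Set (Fin N → ℝ)) : ℕ := (vertexSet P).ncard

def facetCount {N : ℕ} (P : Set (Fin N → ℝ)) : ℕ := {F | IsFacetOf F P}.ncard

/-- Extension complexity: the minimal number of facets of a polytope (in any dimension)
admitting an affine projection onto `P`. -/
def xc {N : ℕ} (P : Set (Fin N → ℝ)) : ℕ :=
  sInf {n | ∃ (e : ℕ) (Q : Set (Fin e → ℝ)) (π : (Fin e → ℝ) →ᵃ[ℝ] (Fin N → ℝ)),
    IsPolytope Q ∧ π '' Q = P ∧ facetCount Q = n}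

/-- Combinatorial equivalence: an inclusion-preserving bijection between face lattices. -/
def CombEquiv {M N : ℕ} (P : Set (Fin M → ℝ)) (Q : Set (Fin N → ℝ)) : Prop :=
  ∃ φ : {F : Set (Fin M → ℝ) // IsFaceOf F P} ≃ {G : Set (Fin N → ℝ) // IsFaceOf G Q},
    ∀ F₁ F₂ : {F : Set (Fin M → ℝ) // IsFaceOf F P},
      F₁.1 ⊆ F₂.1 ↔ (φ F₁).1 ⊆ (φ F₂).1

/-- A full-dimensional `n`-simplex in `ℝ^n` with the origin in its (relative) interior. -/
def simplexF (n : ℕ) : Set (Fin n → ℝ) :=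
  convexHull ℝ ((Set.range fun i : Fin n => Pi.single i (1 : ℝ)) ∪ {fun _ => -1})

/-- The Cartesian product `Δ_n × Δ_m`, realized in `ℝ^{n+m}`. -/
def prodP (n m : ℕ) : Set (Fin (n + m) → ℝ) :=
  {z | ∃ a ∈ simplexF n, ∃ b ∈ simplexF m, z = Fin.append a b}

/-- The direct sum `Δ_n ⊕ Δ_m`, realized in `ℝ^{n+m}`. -/
def sumP (n m : ℕ) : Set (Fin (n + m) → ℝ) :=
  convexHull ℝ (((fun a : Fin n → ℝ => Fin.append a (0 : Fin m → ℝ)) '' simplexF n) ∪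
    ((fun b : Fin m → ℝ => Fin.append (0 : Fin n → ℝ) b) '' simplexF m))

/-- The join `A ⋆ B` of two polytopes, realized in `ℝ^{p+q+1}` with the two copies
placed in skew affine subspaces. -/
def joinP {p q : ℕ} (A : Set (Fin p → ℝ)) (B : Set (Fin q → ℝ)) :
    Set (Fin (p + q + 1) → ℝ) :=
  convexHull ℝ
    (((fun a : Fin p → ℝ =>
        Fin.append (Fin.append a (0 : Fin q → ℝ)) (fun _ : Fin 1 => (0 : ℝ))) '' A) ∪
     ((fun b : Fin q → ℝ =>
        Fin.append (Fin.append (0 : Fin p → ℝ) b) (fun _ : Fin 1 => (1 : ℝ))) '' B))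

/-- The canonical `k`-fold iterated pyramid over `X`, realized in `ℝ^{p+k}`. -/
def pyrK {p : ℕ} (k : ℕ) (X : Set (Fin p → ℝ)) : Set (Fin (p + k) → ℝ) :=
  convexHull ℝ (((fun x : Fin p → ℝ => Fin.append x (0 : Fin k → ℝ)) '' X) ∪
    Set.range (fun j : Fin k => Fin.append (0 : Fin p → ℝ) (Pi.single j (1 : ℝ))))

/-- Transport a subset of `ℝ^a` to `ℝ^b` along a proof that `a = b`. -/
def castSet {a b : ℕ} (h : a = b) (X : Set (Fin a → ℝ)) : Set (Fin b → ℝ) :=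
  (fun x : Fin a → ℝ => fun i : Fin b => x (Fin.cast h.symm i)) '' X

/-- Projective equivalence of two subsets of `ℝ^N`: `Q` is the image of `P` under a
projective transformation `x ↦ (A x + b) / (⟨c, x⟩ + δ)` whose associated
`(N+1) × (N+1)` matrix is invertible and whose denominator is positive on `P`. -/
def ProjEquiv {N : ℕ} (P Q : Set (Fin N → ℝ)) : Prop :=
  ∃ (A : (Fin N → ℝ) →ₗ[ℝ] (Fin N → ℝ)) (b c : Fin N → ℝ) (δ : ℝ),
    Function.Bijective
      (fun z : (Fin N → ℝ) × ℝ => (A z.1 + z.2 • b, (∑ i, c i * z.1 i) + δ * z.2)) ∧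
    (∀ x ∈ P, 0 < (∑ i, c i * x i) + δ) ∧
    Q = (fun x : Fin N → ℝ => ((∑ i, c i * x i) + δ)⁻¹ • (A x + b)) '' P

/-- `P` is a pyramid with base `B`: the convex hull of `B` and a point outside
the affine hull of `B`. -/
def IsPyramidOver {N : ℕ} (P B : Set (Fin N → ℝ)) : Prop :=
  ∃ a : Fin N → ℝ, a ∉ affineSpan ℝ B ∧ P = convexHull ℝ (B ∪ {a})

/-- `P` is a `k`-fold iterated pyramid over `B`. -/
def IsKFoldPyramidOver {N : ℕ} : ℕ → Set (Fin N → ℝ) → Set (Fin N → ℝ) → Prop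
  | 0, P, B => P = B
  | k + 1, P, B => ∃ P' : Set (Fin N → ℝ), IsPyramidOver P P' ∧ IsKFoldPyramidOver k P' B

/-- `P` is a pyramid: the convex hull of one of its facets together with one more vertex. -/
def IsPyramidPolytope {N : ℕ} (P : Set (Fin N → ℝ)) : Prop :=
  ∃ (F : Set (Fin N → ℝ)) (v : Fin N → ℝ),
    IsFacetOf F P ∧ IsVertexOf v P ∧ P = convexHull ℝ (F ∪ {v})

/-- A facet is pyramidal if it contains all vertices of the polytope but one. -/
def IsPyramidalFacet {N : ℕ} (F P : Set (Fin N → ℝ)) : Prop :=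
  IsFacetOf F P ∧ ∃ v, IsVertexOf v P ∧ v ∉ F ∧ ∀ w, IsVertexOf w P → w ≠ v → w ∈ F

/-- The projection `π_d : ℝ^{d+1} → ℝ^d` forgetting the last coordinate. -/
def projFun (d : ℕ) : (Fin (d + 1) → ℝ) → (Fin d → ℝ) :=
  fun x i => x i.castSucc

/-- `c` is an outer normal vector exposing the face `F` of `Q`. -/
def IsOuterNormal {N : ℕ} (Q F : Set (Fin N → ℝ)) (c : Fin N → ℝ) : Prop :=
  ∃ b : ℝ, (∀ x ∈ Q, ∑ i, c i * x i ≤ b) ∧ F = {x ∈ Q | ∑ i, c i * x i = b}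

/-- An upper facet: outer normal with positive last coordinate. -/
def IsUpperFacet {d : ℕ} (F Q : Set (Fin (d + 1) → ℝ)) : Prop :=
  IsFacetOf F Q ∧ ∃ c, IsOuterNormal Q F c ∧ 0 < c (Fin.last d)

/-- A lower facet: outer normal with negative last coordinate. -/
def IsLowerFacet {d : ℕ} (F Q : Set (Fin (d + 1) → ℝ)) : Prop :=
  IsFacetOf F Q ∧ ∃ c, IsOuterNormal Q F c ∧ c (Fin.last d) < 0

/-- A vertical facet: every outer normal has vanishing last coordinate. -/
def IsVerticalFacet {d : ℕ} (F Q : Set (Fin (d + 1) → ℝ)) : Prop :=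
  IsFacetOf F Q ∧ ∀ c, IsOuterNormal Q F c → c (Fin.last d) = 0

/-- An equatorial ridge: a ridge that is the intersection of an upper and a lower facet. -/
def IsEquatorialRidge {d : ℕ} (F Q : Set (Fin (d + 1) → ℝ)) : Prop :=
  IsRidgeOf F Q ∧ ∃ F₁ F₂ : Set (Fin (d + 1) → ℝ),
    IsUpperFacet F₁ Q ∧ IsLowerFacet F₂ Q ∧ F = F₁ ∩ F₂

/-- A face `F` of `Q` is preserved under the projection forgetting the last coordinate. -/
def PreservedFace {d : ℕ} (Q F : Set (Fin (d + 1) → ℝ)) : Prop :=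
  IsFaceOf (projFun d '' F) (projFun d '' Q) ∧ projFun d ⁻¹' (projFun d '' F) ∩ Q = F

/-- A face `F` of `Q` is strictly preserved: preserved and of the same dimension as its image. -/
def StrictlyPreservedFace {d : ℕ} (Q F : Set (Fin (d + 1) → ℝ)) : Prop :=
  PreservedFace Q F ∧ pdim (projFun d '' F) = pdim F

/-- A hexagon: a 2-dimensional polytope with exactly 6 vertices. -/
def IsHexagon {N : ℕ} (P : Set (Fin N → ℝ)) : Prop :=
  IsPolytope P ∧ pdim P = 2 ∧ vertexCount P = 6

/-- Three lines are concurrent: they share a common point, or they are pairwise parallel. -/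
def ConcurrentLines {N : ℕ} (L₁ L₂ L₃ : AffineSubspace ℝ (Fin N → ℝ)) : Prop :=
  (∃ x, x ∈ L₁ ∧ x ∈ L₂ ∧ x ∈ L₃) ∨
    (AffineSubspace.Parallel L₁ L₂ ∧ AffineSubspace.Parallel L₂ L₃ ∧
      AffineSubspace.Parallel L₁ L₃)

/-- A cyclic labeling of the vertices of a hexagon: consecutive points are joined by edges. -/
def CyclicLabeling {N : ℕ} (P : Set (Fin N → ℝ)) (p : Fin 6 → (Fin N → ℝ)) : Prop :=
  Function.Injective p ∧ Set.range p = vertexSet P ∧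
    ∀ i : Fin 6, IsFaceOf (segment ℝ (p i) (p (i + 1))) P

/-- A Desarguian hexagon. -/
def Desarguian {N : ℕ} (P : Set (Fin N → ℝ)) : Prop :=
  ∃ p : Fin 6 → (Fin N → ℝ), CyclicLabeling P p ∧
    ConcurrentLines (affineSpan ℝ {p 0, p 1}) (affineSpan ℝ {p 5, p 2})
      (affineSpan ℝ {p 3, p 4})

/-- A polytope is simplicial if every facet is a simplex. -/
def IsSimplicial {N : ℕ} (P : Set (Fin N → ℝ)) : Prop :=
  ∀ F : Set (Fin N → ℝ), IsFacetOf F P →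
    ∃ S : Finset (Fin N → ℝ),
      AffineIndependent ℝ (Subtype.val : {x // x ∈ S} → (Fin N → ℝ)) ∧
      F = convexHull ℝ (S : Set (Fin N → ℝ))

namespace PLAux

open Finset Module Matrix

variable {N : ℕ}

/-- linear functional given by dot product -/
def dotl (c : Fin N → ℝ) : (Fin N → ℝ) →ₗ[ℝ] ℝ where
  toFun x := c ⬝ᵥ x
  map_add' x y := by simp [dotProduct_add]
  map_smul' t x := by simp [dotProduct_smul]

@[simp] lemma dotl_apply (c x : Fin N → ℝ) : dotl c x = c ⬝ᵥ x := rfl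

def Exposes (Q F : Set (Fin N → ℝ)) (c : Fin N → ℝ) (b : ℝ) : Prop :=
  (∀ x ∈ Q, c ⬝ᵥ x ≤ b) ∧ F = {x ∈ Q | c ⬝ᵥ x = b}

lemma bound_on_hull {S : Finset (Fin N → ℝ)} {c : Fin N → ℝ} {b : ℝ}
    (h : ∀ s ∈ S, c ⬝ᵥ s ≤ b) :
    ∀ x ∈ convexHull ℝ (S : Set (Fin N → ℝ)), c ⬝ᵥ x ≤ b := by
  intro x hx
  have hsub : convexHull ℝ (S : Set (Fin N → ℝ)) ⊆ {x | c ⬝ᵥ x ≤ b} :=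
    convexHull_min (fun s hs => h s hs) (convex_halfSpace_le (dotl c).isLinear b)
  exact hsub hx

lemma eq_on_hull {S : Finset (Fin N → ℝ)} {c : Fin N → ℝ} {b : ℝ}
    (h : ∀ s ∈ S, c ⬝ᵥ s = b) :
    ∀ x ∈ convexHull ℝ (S : Set (Fin N → ℝ)), c ⬝ᵥ x = b := by
  intro x hx
  have hsub : convexHull ℝ (S : Set (Fin N → ℝ)) ⊆ {x | c ⬝ᵥ x = b} :=
    convexHull_min (fun s hs => h s hs) (convex_hyperplane (dotl c).isLinear b)
  exact hsub hx

lemma dot_sum_smul (c : Fin N → ℝ) (T : Finset (Fin N → ℝ)) (w : (Fin N → ℝ) → ℝ) :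
    c ⬝ᵥ (∑ s ∈ T, w s • s) = ∑ s ∈ T, w s * (c ⬝ᵥ s) := by
  rw [show c ⬝ᵥ (∑ s ∈ T, w s • s) = dotl c (∑ s ∈ T, w s • s) from rfl, map_sum]
  exact Finset.sum_congr rfl fun s _ => by rw [_root_.map_smul, smul_eq_mul, dotl_apply]

lemma face_conv (S : Finset (Fin N → ℝ)) (c : Fin N → ℝ) (b : ℝ)
    (hb : ∀ s ∈ S, c ⬝ᵥ s ≤ b) :
    {x ∈ convexHull ℝ (S : Set (Fin N → ℝ)) | c ⬝ᵥ x = b}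
      = convexHull ℝ ((S.filter (fun s => c ⬝ᵥ s = b)) : Set (Fin N → ℝ)) := by
  apply Set.Subset.antisymm
  · rintro x ⟨hxQ, hxb⟩
    rw [Finset.convexHull_eq] at hxQ
    obtain ⟨w, hw0, hw1, hwc⟩ := hxQ
    have hxs : x = ∑ s ∈ S, w s • s := by
      rw [← hwc, Finset.centerMass_eq_of_sum_1 _ _ hw1]; rfl
    have hcc : ∑ s ∈ S, w s * (c ⬝ᵥ s) = b := by
      rw [← dot_sum_smul, ← hxs, hxb]
    have hzero : ∑ s ∈ S, w s * (b - c ⬝ᵥ s) = 0 := by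
      have : ∑ s ∈ S, w s * (b - c ⬝ᵥ s)
          = (∑ s ∈ S, w s) * b - ∑ s ∈ S, w s * (c ⬝ᵥ s) := by
        rw [Finset.sum_mul, ← Finset.sum_sub_distrib]
        exact Finset.sum_congr rfl fun s _ => by ring
      rw [this, hw1, hcc]; ring
    have hkey : ∀ s ∈ S, w s * (b - c ⬝ᵥ s) = 0 := by
      rw [← Finset.sum_eq_zero_iff_of_nonneg
        (fun s hs => mul_nonneg (hw0 s hs) (sub_nonneg.2 (hb s hs)))]
      exact hzero
    have hvanish : ∀ s ∈ S, c ⬝ᵥ s ≠ b → w s = 0 := by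
      intro s hs hne
      rcases mul_eq_zero.1 (hkey s hs) with h | h
      · exact h
      · exact absurd (by linarith [sub_eq_zero.1 h] : c ⬝ᵥ s = b) hne
    rw [Finset.convexHull_eq]
    refine ⟨w, fun s hs => hw0 s (Finset.mem_filter.1 hs).1, ?_, ?_⟩
    · rw [Finset.sum_filter]
      rw [← hw1]
      apply Finset.sum_congr rfl
      intro s hs
      by_cases hcs : c ⬝ᵥ s = b
      · simp [hcs]
      · simp [hcs, hvanish s hs hcs]
    · rw [Finset.centerMass_eq_of_sum_1]
      · simp only [id]
        rw [hxs]
        apply Finset.sum_subset (Finset.filter_subset _ _)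
        intro s hs hns
        have : c ⬝ᵥ s ≠ b := fun h => hns (Finset.mem_filter.2 ⟨hs, h⟩)
        rw [hvanish s hs this, zero_smul]
      · rw [Finset.sum_filter, ← hw1]
        apply Finset.sum_congr rfl
        intro s hs
        by_cases hcs : c ⬝ᵥ s = b
        · simp [hcs]
        · simp [hcs, hvanish s hs hcs]
  · intro x hx
    refine ⟨convexHull_mono (by exact_mod_cast Finset.filter_subset _ S) hx, ?_⟩
    exact eq_on_hull (fun s hs => (Finset.mem_filter.1 hs).2) x hx

lemma exposes_add {Q F₁ F₂ : Set (Fin N → ℝ)} {c₁ c₂ : Fin N → ℝ} {b₁ b₂ : ℝ}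
    (h₁ : Exposes Q F₁ c₁ b₁) (h₂ : Exposes Q F₂ c₂ b₂) :
    Exposes Q (F₁ ∩ F₂) (c₁ + c₂) (b₁ + b₂) := by
  obtain ⟨hb₁, hF₁⟩ := h₁; obtain ⟨hb₂, hF₂⟩ := h₂
  constructor
  · intro x hx; rw [add_dotProduct]; exact add_le_add (hb₁ x hx) (hb₂ x hx)
  · ext x
    simp only [hF₁, hF₂, Set.mem_inter_iff, Set.mem_setOf_eq, add_dotProduct]
    constructor
    · rintro ⟨⟨hx, e1⟩, ⟨-, e2⟩⟩; exact ⟨hx, by rw [e1, e2]⟩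
    · rintro ⟨hx, e⟩
      have l1 := hb₁ x hx; have l2 := hb₂ x hx
      exact ⟨⟨hx, by linarith⟩, ⟨hx, by linarith⟩⟩

lemma smul_dot (t : ℝ) (c x : Fin N → ℝ) : (t • c) ⬝ᵥ x = t * (c ⬝ᵥ x) := by
  simp [dotProduct, Finset.mul_sum, mul_assoc]

lemma dot_smul (t : ℝ) (c x : Fin N → ℝ) : c ⬝ᵥ (t • x) = t * (c ⬝ᵥ x) := by
  simp [dotProduct, Finset.mul_sum]
  exact Finset.sum_congr rfl fun i _ => by ring

lemma exposes_smul {Q F : Set (Fin N → ℝ)} {c : Fin N → ℝ} {b t : ℝ} (ht : 0 < t)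
    (h : Exposes Q F c b) : Exposes Q F (t • c) (t * b) := by
  obtain ⟨hb, hF⟩ := h
  constructor
  · intro x hx
    rw [smul_dot]
    exact mul_le_mul_of_nonneg_left (hb x hx) ht.le
  · rw [hF]; ext x
    simp only [Set.mem_setOf_eq, smul_dot]
    constructor
    · rintro ⟨hx, e⟩; exact ⟨hx, by rw [e]⟩
    · rintro ⟨hx, e⟩; exact ⟨hx, mul_left_cancel₀ ht.ne' e⟩

lemma add_smul_dot (c w x : Fin N → ℝ) (t : ℝ) :
    (c + t • w) ⬝ᵥ x = c ⬝ᵥ x + t * (w ⬝ᵥ x) := by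
  rw [add_dotProduct, smul_dot]

/-- Perturbing an exposing functional by a functional constant on the exposed
vertices keeps the same face, for small positive t. -/
lemma perturb_core (S : Finset (Fin N → ℝ)) (c w : Fin N → ℝ) (b β : ℝ)
    (hb : ∀ s ∈ S, c ⬝ᵥ s ≤ b)
    (hw : ∀ s ∈ S.filter (fun s => c ⬝ᵥ s = b), w ⬝ᵥ s = β) :
    ∃ ε > 0, ∀ t : ℝ, 0 < t → t ≤ ε →
      (∀ s ∈ S, (c + t • w) ⬝ᵥ s ≤ b + t * β) ∧
      S.filter (fun s => (c + t • w) ⬝ᵥ s = b + t * β)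
        = S.filter (fun s => c ⬝ᵥ s = b) := by
  classical
  set D := S.filter (fun s => c ⬝ᵥ s ≠ b) with hD
  set rat := fun s => (b - c ⬝ᵥ s) / (1 + |w ⬝ᵥ s - β|) with hrat
  set A : Finset ℝ := insert 1 (D.image rat) with hA
  have hAne : A.Nonempty := ⟨1, Finset.mem_insert_self _ _⟩
  refine ⟨A.min' hAne, ?_, ?_⟩
  · show (0:ℝ) < A.min' hAne
    rw [Finset.lt_min'_iff]
    intro y hy
    rcases Finset.mem_insert.1 hy with rfl | hy
    · norm_num
    · obtain ⟨s, hs, rfl⟩ := Finset.mem_image.1 hy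
      have hsS : s ∈ S := (Finset.mem_filter.1 hs).1
      have hsne : c ⬝ᵥ s ≠ b := (Finset.mem_filter.1 hs).2
      have h1 : 0 < b - c ⬝ᵥ s := by
        have := hb s hsS
        cases lt_or_eq_of_le this with
        | inl h => linarith
        | inr h => exact absurd h hsne
      have h2 : 0 < 1 + |w ⬝ᵥ s - β| := by positivity
      exact div_pos h1 h2
  · intro t ht htε
    have hstrict : ∀ s ∈ D, c ⬝ᵥ s + t * (w ⬝ᵥ s) < b + t * β := by
      intro s hs
      have hsS : s ∈ S := (Finset.mem_filter.1 hs).1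
      have hsne : c ⬝ᵥ s ≠ b := (Finset.mem_filter.1 hs).2
      have h1 : 0 < b - c ⬝ᵥ s := by
        have := hb s hsS
        cases lt_or_eq_of_le this with
        | inl h => linarith
        | inr h => exact absurd h hsne
      have h2 : 0 < 1 + |w ⬝ᵥ s - β| := by positivity
      have hεle : A.min' hAne ≤ rat s :=
        Finset.min'_le _ _ (Finset.mem_insert_of_mem (Finset.mem_image_of_mem _ hs))
      have htle : t ≤ rat s := le_trans htε hεle
      have key : t * (w ⬝ᵥ s - β) < b - c ⬝ᵥ s := by
        calc t * (w ⬝ᵥ s - β) ≤ t * |w ⬝ᵥ s - β| := by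
              apply mul_le_mul_of_nonneg_left (le_abs_self _) ht.le
        _ < t * (1 + |w ⬝ᵥ s - β|) := by
              apply mul_lt_mul_of_pos_left (by linarith [abs_nonneg (w ⬝ᵥ s - β)]) ht
        _ ≤ rat s * (1 + |w ⬝ᵥ s - β|) := by
              apply mul_le_mul_of_nonneg_right htle h2.le
        _ = b - c ⬝ᵥ s := by
              rw [hrat]; field_simp
      linarith
    have heq : ∀ s ∈ S, c ⬝ᵥ s = b → c ⬝ᵥ s + t * (w ⬝ᵥ s) = b + t * β := by
      intro s hsS hsb
      have : w ⬝ᵥ s = β := hw s (Finset.mem_filter.2 ⟨hsS, hsb⟩)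
      rw [hsb, this]
    constructor
    · intro s hsS
      rw [add_smul_dot]
      by_cases hsb : c ⬝ᵥ s = b
      · exact le_of_eq (heq s hsS hsb)
      · exact le_of_lt (hstrict s (Finset.mem_filter.2 ⟨hsS, hsb⟩))
    · ext s
      simp only [Finset.mem_filter, add_smul_dot]
      constructor
      · rintro ⟨hsS, he⟩
        refine ⟨hsS, ?_⟩
        by_contra hsb
        exact absurd he (ne_of_lt (hstrict s (Finset.mem_filter.2 ⟨hsS, hsb⟩)))
      · rintro ⟨hsS, hsb⟩
        exact ⟨hsS, heq s hsS hsb⟩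

/-- Rotating an exposing functional until it exposes a strictly larger face. -/
lemma rotate_core (S : Finset (Fin N → ℝ)) (c w : Fin N → ℝ) (b β : ℝ)
    (hb : ∀ s ∈ S, c ⬝ᵥ s ≤ b)
    (hw : ∀ s ∈ S.filter (fun s => c ⬝ᵥ s = b), w ⬝ᵥ s = β)
    (s₀ : Fin N → ℝ) (hs₀ : s₀ ∈ S) (hβ : β < w ⬝ᵥ s₀) :
    ∃ θ > 0, (∀ s ∈ S, (c + θ • w) ⬝ᵥ s ≤ b + θ * β) ∧
      S.filter (fun s => c ⬝ᵥ s = b)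
        ⊆ S.filter (fun s => (c + θ • w) ⬝ᵥ s = b + θ * β) ∧
      ∃ s₁ ∈ S, ((c + θ • w) ⬝ᵥ s₁ = b + θ * β ∧ c ⬝ᵥ s₁ ≠ b) := by
  classical
  set P := S.filter (fun s => β < w ⬝ᵥ s) with hP
  have hPne : P.Nonempty := ⟨s₀, Finset.mem_filter.2 ⟨hs₀, hβ⟩⟩
  have hPlt : ∀ s ∈ P, c ⬝ᵥ s < b := by
    intro s hs
    obtain ⟨hsS, hsw⟩ := Finset.mem_filter.1 hs
    rcases lt_or_eq_of_le (hb s hsS) with h | h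
    · exact h
    · exact absurd (hw s (Finset.mem_filter.2 ⟨hsS, h⟩)) (ne_of_gt hsw)
  set g := fun s => (b - c ⬝ᵥ s) / (w ⬝ᵥ s - β) with hg
  set θ := P.inf' hPne g with hθ
  have hθpos : 0 < θ := by
    rw [hθ, Finset.lt_inf'_iff]
    intro s hs
    have h1 : 0 < b - c ⬝ᵥ s := by linarith [hPlt s hs]
    have h2 : 0 < w ⬝ᵥ s - β := by
      have := (Finset.mem_filter.1 hs).2; linarith
    exact div_pos h1 h2
  refine ⟨θ, hθpos, ?_, ?_, ?_⟩
  · intro s hsS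
    rw [add_smul_dot]
    by_cases hsw : β < w ⬝ᵥ s
    · have hsP : s ∈ P := Finset.mem_filter.2 ⟨hsS, hsw⟩
      have h2 : 0 < w ⬝ᵥ s - β := by linarith
      have hθle : θ ≤ g s := Finset.inf'_le _ hsP
      have : θ * (w ⬝ᵥ s - β) ≤ b - c ⬝ᵥ s := by
        rw [hg] at hθle
        calc θ * (w ⬝ᵥ s - β) ≤ ((b - c ⬝ᵥ s) / (w ⬝ᵥ s - β)) * (w ⬝ᵥ s - β) :=
              mul_le_mul_of_nonneg_right hθle h2.le
        _ = b - c ⬝ᵥ s := by field_simp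
      linarith
    · push_neg at hsw
      have : θ * (w ⬝ᵥ s) ≤ θ * β := mul_le_mul_of_nonneg_left hsw hθpos.le
      have := hb s hsS
      linarith
  · intro s hs
    obtain ⟨hsS, hsb⟩ := Finset.mem_filter.1 hs
    have hsw : w ⬝ᵥ s = β := hw s hs
    exact Finset.mem_filter.2 ⟨hsS, by rw [add_smul_dot, hsb, hsw]⟩
  · obtain ⟨s₁, hs₁P, hs₁θ⟩ := Finset.exists_mem_eq_inf' hPne g
    obtain ⟨hs₁S, hs₁w⟩ := Finset.mem_filter.1 hs₁P
    have h2 : 0 < w ⬝ᵥ s₁ - β := by linarith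
    refine ⟨s₁, hs₁S, ?_, ne_of_lt (hPlt s₁ hs₁P)⟩
    rw [add_smul_dot]
    have : θ * (w ⬝ᵥ s₁ - β) = b - c ⬝ᵥ s₁ := by
      have hθg : θ = (b - c ⬝ᵥ s₁) / (w ⬝ᵥ s₁ - β) := by rw [hθ, hs₁θ]
      rw [hθg]; field_simp
    linarith


lemma pdim_eq_finrank {P : Set (Fin N → ℝ)} (h : P.Nonempty) :
    pdim P = (Module.finrank ℝ (vectorSpan ℝ P) : ℤ) := by
  unfold pdim
  rw [if_pos h, direction_affineSpan]

lemma vectorSpan_le_ker {P : Set (Fin N → ℝ)} {c : Fin N → ℝ} {b : ℝ}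
    (h : ∀ x ∈ P, c ⬝ᵥ x = b) :
    vectorSpan ℝ P ≤ LinearMap.ker (dotl c) := by
  rw [vectorSpan_def, Submodule.span_le]
  rintro v ⟨x, hx, y, hy, rfl⟩
  simp only [SetLike.mem_coe, LinearMap.mem_ker]
  have hsub : dotl c (x -ᵥ y) = dotl c x - dotl c y := by
    rw [vsub_eq_sub, map_sub]
  rw [hsub, dotl_apply, dotl_apply, h x hx, h y hy, sub_self]

lemma finrank_ker_dotl {c : Fin N → ℝ} (hc : c ≠ 0) :
    Module.finrank ℝ (LinearMap.ker (dotl c)) + 1 = N := by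
  have h := LinearMap.finrank_range_add_finrank_ker (dotl c)
  have hcc : c ⬝ᵥ c ≠ 0 := by
    intro h0
    exact hc ((dotProduct_self_eq_zero).1 h0)
  have hr : LinearMap.range (dotl c) = ⊤ := by
    rw [LinearMap.range_eq_top]
    intro y
    refine ⟨((c ⬝ᵥ c)⁻¹ * y) • c, ?_⟩
    rw [dotl_apply, dot_smul]
    field_simp
  rw [hr, finrank_top, Module.finrank_self, Module.finrank_fin_fun] at h
  omega

lemma vectorSpan_convexHull' (s : Set (Fin N → ℝ)) :
    vectorSpan ℝ (convexHull ℝ s) = vectorSpan ℝ s := by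
  rw [← direction_affineSpan, ← direction_affineSpan, affineSpan_convexHull]

lemma dot_of_dual (φ : Module.Dual ℝ (Fin N → ℝ)) (x : Fin N → ℝ) :
    (fun i => φ (Pi.single i 1)) ⬝ᵥ x = φ x := by
  rw [LinearMap.pi_apply_eq_sum_univ φ x, dotProduct]
  refine Finset.sum_congr rfl fun i _ => ?_
  rw [smul_eq_mul, mul_comm]
  congr 2
  funext j
  simp [Pi.single_apply, eq_comm]

lemma exists_w {U : Submodule ℝ (Fin N → ℝ)} {v : Fin N → ℝ} (hv : v ∉ U) :
    ∃ w : Fin N → ℝ, (∀ u ∈ U, w ⬝ᵥ u = 0) ∧ w ⬝ᵥ v = 1 := by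
  obtain ⟨φ, hφv, hφU⟩ := U.exists_dual_map_eq_bot_of_notMem hv inferInstance
  set ψ := (φ v)⁻¹ • φ with hψ
  refine ⟨fun i => ψ (Pi.single i 1), ?_, ?_⟩
  · intro u hu
    rw [dot_of_dual]
    have h0 : φ u = 0 := by
      have : φ u ∈ U.map φ := Submodule.mem_map_of_mem hu
      rwa [hφU, Submodule.mem_bot] at this
    simp [hψ, h0]
  · rw [dot_of_dual]
    simp [hψ, inv_mul_cancel₀ hφv]

lemma single_last_ne_zero {d : ℕ} : (Pi.single (Fin.last d) (1:ℝ) : Fin (d+1) → ℝ) ≠ 0 := by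
  intro h
  simpa using congrFun h (Fin.last d)

/-- Key growth lemma: a nonempty face exposed by a non-horizontal functional is
contained in a facet exposed by a functional with the same last coordinate. -/
lemma grow {d : ℕ} (S : Finset (Fin (d+1) → ℝ)) (Q : Set (Fin (d+1) → ℝ))
    (hQ : Q = convexHull ℝ (S : Set (Fin (d+1) → ℝ))) (hdQ : pdim Q = d + 1) :
    ∀ (n : ℕ) (c : Fin (d+1) → ℝ) (b : ℝ),
      (S.filter (fun s => c ⬝ᵥ s = b)).Nonempty →
      (∀ s ∈ S, c ⬝ᵥ s ≤ b) →
      c (Fin.last d) ≠ 0 →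
      (S \ S.filter (fun s => c ⬝ᵥ s = b)).card ≤ n →
      ∃ (G : Set (Fin (d+1) → ℝ)) (c' : Fin (d+1) → ℝ),
        IsFacetOf G Q ∧ IsOuterNormal Q G c' ∧
        convexHull ℝ ((S.filter (fun s => c ⬝ᵥ s = b)) : Set (Fin (d+1) → ℝ)) ⊆ G ∧
        c' (Fin.last d) = c (Fin.last d) := by
  classical
  have hQfr : Module.finrank ℝ (vectorSpan ℝ (S : Set (Fin (d+1) → ℝ))) = d + 1 := by
    have hQne : Q.Nonempty := by
      rcases Set.eq_empty_or_nonempty Q with h | h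
      · exfalso
        rw [h] at hdQ
        unfold pdim at hdQ
        rw [if_neg (by simp)] at hdQ
        omega
      · exact h
    have h2 : pdim Q = (Module.finrank ℝ (vectorSpan ℝ (S : Set (Fin (d+1) → ℝ))) : ℤ) := by
      rw [pdim_eq_finrank hQne, hQ, vectorSpan_convexHull']
    rw [hdQ] at h2
    have h3 : ((d : ℤ) + 1) = (Module.finrank ℝ (vectorSpan ℝ (S : Set (Fin (d+1) → ℝ))) : ℤ) := h2
    omega
  intro n
  induction n with
  | zero =>
    intro c b hTne hb hc hcard
    exfalso
    have hTS : S.filter (fun s => c ⬝ᵥ s = b) = S := by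
      have : S \ S.filter (fun s => c ⬝ᵥ s = b) = ∅ := Finset.card_eq_zero.1 (Nat.le_zero.1 hcard)
      have hsub : S ⊆ S.filter (fun s => c ⬝ᵥ s = b) := Finset.sdiff_eq_empty_iff_subset.1 this
      exact Finset.Subset.antisymm (Finset.filter_subset _ _) hsub
    have hconst : ∀ s ∈ (S : Set (Fin (d+1) → ℝ)), c ⬝ᵥ s = b := by
      intro s hs
      have hfs : s ∈ S.filter (fun s => c ⬝ᵥ s = b) := by
        rw [hTS]; exact Finset.mem_coe.1 hs
      exact (Finset.mem_filter.1 hfs).2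
    have hcne : c ≠ 0 := fun h => hc (congrFun h (Fin.last d))
    have hle := (vectorSpan_le_ker hconst)
    have h1 : Module.finrank ℝ (vectorSpan ℝ (S : Set (Fin (d+1) → ℝ)))
        ≤ Module.finrank ℝ (LinearMap.ker (dotl c)) := Submodule.finrank_mono hle
    have h2 := finrank_ker_dotl hcne
    omega
  | succ n ih =>
    intro c b hTne hb hc hcard
    set T := S.filter (fun s => c ⬝ᵥ s = b) with hT
    obtain ⟨t₀, ht₀⟩ := hTne
    have hTconst : ∀ s ∈ (T : Set (Fin (d+1) → ℝ)), c ⬝ᵥ s = b := by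
      intro s hs; exact (Finset.mem_filter.1 (Finset.mem_coe.1 hs)).2
    have hcne : c ≠ 0 := fun h => hc (congrFun h (Fin.last d))
    have hVle := vectorSpan_le_ker hTconst
    have hVd : Module.finrank ℝ (vectorSpan ℝ (T : Set (Fin (d+1) → ℝ))) ≤ d := by
      have h1 := Submodule.finrank_mono hVle
      have h2 := finrank_ker_dotl hcne
      omega
    by_cases hdim : Module.finrank ℝ (vectorSpan ℝ (T : Set (Fin (d+1) → ℝ))) = d
    · -- we already have a facet
      have hbQ : ∀ x ∈ Q, c ⬝ᵥ x ≤ b := by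
        rw [hQ]; exact bound_on_hull hb
      have hface : {x ∈ Q | c ⬝ᵥ x = b} = convexHull ℝ (T : Set (Fin (d+1) → ℝ)) := by
        rw [hQ]; exact face_conv S c b hb
      have hTneS : (convexHull ℝ (T : Set (Fin (d+1) → ℝ))).Nonempty :=
        ⟨t₀, subset_convexHull ℝ _ (Finset.mem_coe.2 ht₀)⟩
      have hpd : pdim (convexHull ℝ (T : Set (Fin (d+1) → ℝ))) = (d : ℤ) := by
        rw [pdim_eq_finrank hTneS, vectorSpan_convexHull', hdim]
      refine ⟨convexHull ℝ (T : Set (Fin (d+1) → ℝ)), c, ⟨⟨c, b, hbQ, hface.symm⟩, ?_⟩,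
        ⟨b, hbQ, hface.symm⟩, subset_rfl, rfl⟩
      rw [hpd, hdQ]
    · -- rotate to a bigger face
      have hVlt : Module.finrank ℝ (vectorSpan ℝ (T : Set (Fin (d+1) → ℝ))) < d :=
        lt_of_le_of_ne hVd hdim
      set e : Fin (d+1) → ℝ := Pi.single (Fin.last d) 1 with he
      set U : Submodule ℝ (Fin (d+1) → ℝ) := vectorSpan ℝ (T : Set (Fin (d+1) → ℝ)) ⊔ (ℝ ∙ e)
        with hU
      have heU : e ∈ U := Submodule.mem_sup_right (Submodule.mem_span_singleton_self e)
      have hUfr : Module.finrank ℝ U ≤ d := by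
        rw [hU]
        have h1 := Submodule.finrank_sup_add_finrank_inf_eq
          (vectorSpan ℝ (T : Set (Fin (d+1) → ℝ))) (ℝ ∙ e)
        have h2 : Module.finrank ℝ (ℝ ∙ e) = 1 := by
          rw [he]; exact finrank_span_singleton single_last_ne_zero
        omega
      have hSout : ∃ s₀ ∈ S, s₀ - t₀ ∉ U := by
        by_contra hcon
        push_neg at hcon
        have hSle : vectorSpan ℝ (S : Set (Fin (d+1) → ℝ)) ≤ U := by
          rw [vectorSpan_def, Submodule.span_le]
          rintro v ⟨x, hx, y, hy, rfl⟩
          have hmem : (x - t₀) - (y - t₀) ∈ U :=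
            Submodule.sub_mem U (hcon x (Finset.mem_coe.1 hx)) (hcon y (Finset.mem_coe.1 hy))
          rw [sub_sub_sub_cancel_right] at hmem
          simpa [vsub_eq_sub] using hmem
        have := Submodule.finrank_mono hSle
        omega
      obtain ⟨s₀, hs₀S, hs₀U⟩ := hSout
      obtain ⟨w, hwU, hwv⟩ := exists_w hs₀U
      have hwlast : w (Fin.last d) = 0 := by
        have := hwU e heU
        rwa [he, dotProduct_single, mul_one] at this
      set β := w ⬝ᵥ t₀ with hβ
      have hwT : ∀ s ∈ S.filter (fun s => c ⬝ᵥ s = b), w ⬝ᵥ s = β := by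
        intro s hs
        have hsV : s - t₀ ∈ vectorSpan ℝ (T : Set (Fin (d+1) → ℝ)) := by
          have := vsub_mem_vectorSpan ℝ (Finset.mem_coe.2 (hs)) (Finset.mem_coe.2 ht₀)
          rwa [vsub_eq_sub] at this
        have h0 : w ⬝ᵥ (s - t₀) = 0 := hwU _ (Submodule.mem_sup_left hsV)
        rw [dotProduct_sub] at h0
        linarith
      have hws₀ : β < w ⬝ᵥ s₀ := by
        have : w ⬝ᵥ (s₀ - t₀) = 1 := hwv
        rw [dotProduct_sub] at this
        linarith
      obtain ⟨θ, hθpos, hθb, hθsub, s₁, hs₁S, hs₁eq, hs₁ne⟩ :=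
        rotate_core S c w b β hb hwT s₀ hs₀S hws₀
      set c2 := c + θ • w with hc2
      set b2 := b + θ * β with hb2
      have hc2last : c2 (Fin.last d) = c (Fin.last d) := by
        rw [hc2]
        simp [hwlast]
      have hT2ne : (S.filter (fun s => c2 ⬝ᵥ s = b2)).Nonempty :=
        ⟨t₀, hθsub ht₀⟩
      have hs₁T2 : s₁ ∈ S.filter (fun s => c2 ⬝ᵥ s = b2) := Finset.mem_filter.2 ⟨hs₁S, hs₁eq⟩
      have hs₁T : s₁ ∉ T := by
        intro h
        exact hs₁ne (Finset.mem_filter.1 h).2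
      have hcard2 : (S \ S.filter (fun s => c2 ⬝ᵥ s = b2)).card ≤ n := by
        have hsub2 : S \ S.filter (fun s => c2 ⬝ᵥ s = b2) ⊆ S \ T :=
          Finset.sdiff_subset_sdiff Finset.Subset.rfl hθsub
        have hstrict : S \ S.filter (fun s => c2 ⬝ᵥ s = b2) ⊂ S \ T := by
          rw [Finset.ssubset_iff_of_subset hsub2]
          exact ⟨s₁, Finset.mem_sdiff.2 ⟨hs₁S, hs₁T⟩,
            fun h => (Finset.mem_sdiff.1 h).2 hs₁T2⟩
        have := Finset.card_lt_card hstrict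
        omega
      obtain ⟨G, c', hGf, hGo, hGsub, hGlast⟩ := ih c2 b2 hT2ne hθb (by rw [hc2last]; exact hc) hcard2
      refine ⟨G, c', hGf, hGo, ?_, by rw [hGlast, hc2last]⟩
      refine Set.Subset.trans ?_ hGsub
      exact convexHull_mono (by exact_mod_cast hθsub)

def projLin (d : ℕ) : (Fin (d+1) → ℝ) →ₗ[ℝ] (Fin d → ℝ) where
  toFun := projFun d
  map_add' x y := rfl
  map_smul' t x := rfl

lemma dot_proj {d : ℕ} (c : Fin (d+1) → ℝ) (hc : c (Fin.last d) = 0) (x : Fin (d+1) → ℝ) :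
    (fun i : Fin d => c i.castSucc) ⬝ᵥ projFun d x = c ⬝ᵥ x := by
  have h : c ⬝ᵥ x = (∑ i : Fin d, c i.castSucc * x i.castSucc)
      + c (Fin.last d) * x (Fin.last d) := Fin.sum_univ_castSucc (fun i => c i * x i)
  rw [h, hc, zero_mul, add_zero]
  rfl

lemma exposes_perturbed {d : ℕ} {Q F : Set (Fin (d+1) → ℝ)} (S : Finset (Fin (d+1) → ℝ))
    (hS : Q = convexHull ℝ (S : Set (Fin (d+1) → ℝ))) {c w : Fin (d+1) → ℝ} {b β : ℝ}
    (hex : Exposes Q F c b)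
    (hw : ∀ s ∈ S.filter (fun s => c ⬝ᵥ s = b), w ⬝ᵥ s = β) :
    ∃ t > 0, Exposes Q F (c + t • w) (b + t * β) := by
  have hbS : ∀ s ∈ S, c ⬝ᵥ s ≤ b := fun s hs =>
    hex.1 s (by rw [hS]; exact subset_convexHull ℝ _ hs)
  obtain ⟨ε, hε, hp⟩ := perturb_core S c w b β hbS hw
  obtain ⟨hbd, hfil⟩ := hp ε hε le_rfl
  refine ⟨ε, hε, ?_, ?_⟩
  · intro x hx; rw [hS] at hx; exact bound_on_hull hbd x hx
  · rw [hS, face_conv S _ _ hbd, hfil, ← face_conv S c b hbS, ← hS, ← hex.2]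

lemma preserved_of_zero {d : ℕ} {Q F : Set (Fin (d+1) → ℝ)} {c : Fin (d+1) → ℝ} {b : ℝ}
    (hc : c (Fin.last d) = 0) (hex : Exposes Q F c b) : PreservedFace Q F := by
  obtain ⟨hb, hF⟩ := hex
  have key : ∀ x, (fun i : Fin d => c i.castSucc) ⬝ᵥ projFun d x = c ⬝ᵥ x := dot_proj c hc
  have hFQ : F ⊆ Q := by rw [hF]; intro x hx; exact hx.1
  constructor
  · refine ⟨(fun i : Fin d => c i.castSucc), b, ?_, ?_⟩
    · rintro y ⟨x, hx, rfl⟩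
      show (fun i : Fin d => c i.castSucc) ⬝ᵥ projFun d x ≤ b
      rw [key]
      exact hb x hx
    · ext y
      constructor
      · rintro ⟨x, hxF, rfl⟩
        have hx' := hxF
        rw [hF] at hx'
        refine ⟨⟨x, hx'.1, rfl⟩, ?_⟩
        show (fun i : Fin d => c i.castSucc) ⬝ᵥ projFun d x = b
        rw [key]
        exact hx'.2
      · rintro ⟨⟨x, hxQ, rfl⟩, hyb⟩
        refine ⟨x, ?_, rfl⟩
        rw [hF]
        refine ⟨hxQ, ?_⟩
        rw [← key x]
        exact hyb
  · apply Set.Subset.antisymm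
    · rintro x ⟨⟨x', hx'F, hpp⟩, hxQ⟩
      rw [hF]
      refine ⟨hxQ, ?_⟩
      have hx'' := hx'F
      rw [hF] at hx''
      have hcc : c ⬝ᵥ x = c ⬝ᵥ x' := by rw [← key x, ← key x', hpp]
      rw [hcc]
      exact hx''.2
    · intro x hx
      exact ⟨⟨x, hx, rfl⟩, hFQ hx⟩

lemma exposer_of_preserved {d : ℕ} {Q F : Set (Fin (d+1) → ℝ)} (h : PreservedFace Q F) :
    ∃ c b, Exposes Q F c b ∧ c (Fin.last d) = 0 := by
  obtain ⟨⟨g, b, hgb, hgF⟩, hpre⟩ := h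
  set c : Fin (d+1) → ℝ := fun j => Fin.lastCases 0 g j with hcdef
  have hclast : c (Fin.last d) = 0 := by simp [hcdef]
  have hccast : (fun i : Fin d => c i.castSucc) = g := by
    funext i; simp [hcdef]
  have key : ∀ x, c ⬝ᵥ x = g ⬝ᵥ projFun d x := by
    intro x; rw [← dot_proj c hclast x, hccast]
  refine ⟨c, b, ⟨?_, ?_⟩, hclast⟩
  · intro x hx
    rw [key]
    exact hgb _ ⟨x, hx, rfl⟩
  · apply Set.Subset.antisymm
    · intro x hxF
      have hxQ : x ∈ Q := by
        rw [← hpre] at hxF; exact hxF.2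
      refine ⟨hxQ, ?_⟩
      have himg : projFun d x ∈ projFun d '' F := ⟨x, hxF, rfl⟩
      rw [hgF] at himg
      rw [key]
      exact himg.2
    · rintro x ⟨hxQ, hxb⟩
      rw [← hpre]
      refine ⟨?_, hxQ⟩
      show projFun d x ∈ projFun d '' F
      rw [hgF]
      refine ⟨⟨x, hxQ, rfl⟩, ?_⟩
      show g ⬝ᵥ projFun d x = b
      rw [← key]
      exact hxb

lemma vectorSpan_proj {d : ℕ} (F : Set (Fin (d+1) → ℝ)) :
    vectorSpan ℝ (projFun d '' F) = (vectorSpan ℝ F).map (projLin d) := by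
  exact (AffineMap.vectorSpan_image_eq_submodule_map
    (f := (projLin d).toAffineMap) (s := F)).symm

lemma proj_single_last {d : ℕ} :
    projLin d (Pi.single (Fin.last d) (1:ℝ) : Fin (d+1) → ℝ) = 0 := by
  funext i
  show (Pi.single (Fin.last d) (1:ℝ) : Fin (d+1) → ℝ) i.castSucc = 0
  simp [projLin, projFun, Pi.single_apply, (Fin.castSucc_lt_last i).ne]

lemma ker_proj_e {d : ℕ} {v : Fin (d+1) → ℝ} (hv : projLin d v = 0) :
    v = v (Fin.last d) • (Pi.single (Fin.last d) (1:ℝ) : Fin (d+1) → ℝ) := by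
  funext j
  refine Fin.lastCases ?_ ?_ j
  · simp
  · intro i
    have h := congrFun hv i
    change v i.castSucc = 0 at h
    simp [h, Pi.single_apply, (Fin.castSucc_lt_last i).ne]

lemma pdim_proj_eq {d : ℕ} {F : Set (Fin (d+1) → ℝ)} (hne : F.Nonempty)
    (he : (Pi.single (Fin.last d) (1:ℝ) : Fin (d+1) → ℝ) ∉ vectorSpan ℝ F) :
    pdim (projFun d '' F) = pdim F := by
  have hker : LinearMap.ker ((projLin d).domRestrict (vectorSpan ℝ F)) = ⊥ := by
    rw [Submodule.eq_bot_iff]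
    intro x hx0
    rw [LinearMap.mem_ker, LinearMap.domRestrict_apply] at hx0
    have hrep := ker_proj_e hx0
    apply Subtype.ext
    by_cases hvz : (x : Fin (d+1) → ℝ) = 0
    · exact hvz
    · exfalso
      have ht : (x : Fin (d+1) → ℝ) (Fin.last d) ≠ 0 := by
        intro h0; apply hvz; rw [hrep, h0, zero_smul]
      apply he
      set t := (x : Fin (d+1) → ℝ) (Fin.last d) with htdef
      have hsm : t⁻¹ • (x : Fin (d+1) → ℝ) ∈ vectorSpan ℝ F := Submodule.smul_mem _ _ x.2
      rw [hrep] at hsm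
      rwa [smul_smul, inv_mul_cancel₀ ht, one_smul] at hsm
  have h1 := LinearMap.finrank_range_add_finrank_ker ((projLin d).domRestrict (vectorSpan ℝ F))
  rw [hker, finrank_bot, add_zero, LinearMap.range_domRestrict] at h1
  rw [pdim_eq_finrank (hne.image _), pdim_eq_finrank hne, vectorSpan_proj]
  exact_mod_cast h1

lemma pdim_proj_ne {d : ℕ} {F : Set (Fin (d+1) → ℝ)} (hne : F.Nonempty)
    (he : (Pi.single (Fin.last d) (1:ℝ) : Fin (d+1) → ℝ) ∈ vectorSpan ℝ F) :
    pdim (projFun d '' F) ≠ pdim F := by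
  have h1 := LinearMap.finrank_range_add_finrank_ker ((projLin d).domRestrict (vectorSpan ℝ F))
  rw [LinearMap.range_domRestrict] at h1
  have hmem : (⟨_, he⟩ : vectorSpan ℝ F) ∈ LinearMap.ker ((projLin d).domRestrict (vectorSpan ℝ F)) := by
    rw [LinearMap.mem_ker, LinearMap.domRestrict_apply]
    exact proj_single_last
  have hnz : (⟨(⟨_, he⟩ : vectorSpan ℝ F), hmem⟩ :
      LinearMap.ker ((projLin d).domRestrict (vectorSpan ℝ F))) ≠ 0 := by
    intro h0
    have h1' : (⟨_, he⟩ : vectorSpan ℝ F) = 0 := by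
      simpa using Subtype.ext_iff.1 h0
    have h2' : (Pi.single (Fin.last d) (1:ℝ) : Fin (d+1) → ℝ) = 0 := by
      simpa using Subtype.ext_iff.1 h1'
    exact single_last_ne_zero h2'
  have hkpos : 0 < Module.finrank ℝ (LinearMap.ker ((projLin d).domRestrict (vectorSpan ℝ F))) :=
    Module.finrank_pos_iff.2 (nontrivial_of_ne _ 0 hnz)
  rw [pdim_eq_finrank (hne.image _), pdim_eq_finrank hne, vectorSpan_proj]
  intro hcast
  have h2 : Module.finrank ℝ ((vectorSpan ℝ F).map (projLin d))
      = Module.finrank ℝ (vectorSpan ℝ F) := by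
    exact_mod_cast hcast
  omega

lemma not_mem_vs {d : ℕ} {Q F : Set (Fin (d+1) → ℝ)} {c : Fin (d+1) → ℝ} {b : ℝ}
    (hex : Exposes Q F c b) (hc : c (Fin.last d) ≠ 0) :
    (Pi.single (Fin.last d) (1:ℝ) : Fin (d+1) → ℝ) ∉ vectorSpan ℝ F := by
  intro he
  have hconst : ∀ x ∈ F, c ⬝ᵥ x = b := by
    intro x hx; rw [hex.2] at hx; exact hx.2
  have hk := vectorSpan_le_ker hconst he
  rw [LinearMap.mem_ker, dotl_apply, dotProduct_single, mul_one] at hk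
  exact hc hk

lemma strict_of_ul {d : ℕ} {Q F : Set (Fin (d+1) → ℝ)} {c : Fin (d+1) → ℝ} {b : ℝ}
    (hex : Exposes Q F c b) (hne : F.Nonempty)
    {F₁ F₂ : Set (Fin (d+1) → ℝ)} (h1 : F ⊆ F₁) (h2 : F ⊆ F₂)
    (hu : IsUpperFacet F₁ Q) (hl : IsLowerFacet F₂ Q) :
    StrictlyPreservedFace Q F := by
  obtain ⟨-, n₁, hn₁o, hn₁⟩ := hu
  obtain ⟨-, n₂, hn₂o, hn₂⟩ := hl
  obtain ⟨b₁, hb₁, hF₁⟩ := hn₁o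
  obtain ⟨b₂, hb₂, hF₂⟩ := hn₂o
  have e₁ : Exposes Q F₁ n₁ b₁ := ⟨hb₁, hF₁⟩
  have e₂ : Exposes Q F₂ n₂ b₂ := ⟨hb₂, hF₂⟩
  set s₁ := (|c (Fin.last d)| + 1) / n₁ (Fin.last d) with hs₁
  have hs₁pos : 0 < s₁ := div_pos (by positivity) hn₁
  have ecp : Exposes Q F (c + s₁ • n₁) (b + s₁ * b₁) := by
    have h := exposes_add hex (exposes_smul hs₁pos e₁)
    rwa [Set.inter_eq_self_of_subset_left h1] at h
  have hcp : 0 < (c + s₁ • n₁) (Fin.last d) := by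
    have hprod : s₁ * n₁ (Fin.last d) = |c (Fin.last d)| + 1 := by
      rw [hs₁]; field_simp
    simp only [Pi.add_apply, Pi.smul_apply, smul_eq_mul]
    rw [hprod]
    have := neg_abs_le (c (Fin.last d))
    linarith
  set s₂ := (|c (Fin.last d)| + 1) / (-(n₂ (Fin.last d))) with hs₂
  have hs₂pos : 0 < s₂ := div_pos (by positivity) (by linarith)
  have ecm : Exposes Q F (c + s₂ • n₂) (b + s₂ * b₂) := by
    have h := exposes_add hex (exposes_smul hs₂pos e₂)
    rwa [Set.inter_eq_self_of_subset_left h2] at h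
  have hcm : (c + s₂ • n₂) (Fin.last d) < 0 := by
    have hprod : s₂ * n₂ (Fin.last d) = -(|c (Fin.last d)| + 1) := by
      have hn₂ne : n₂ (Fin.last d) ≠ 0 := ne_of_lt hn₂
      rw [hs₂, div_neg, neg_mul, div_mul_cancel₀ _ hn₂ne]
    simp only [Pi.add_apply, Pi.smul_apply, smul_eq_mul]
    rw [hprod]
    have := le_abs_self (c (Fin.last d))
    linarith
  set cp := c + s₁ • n₁ with hcp'
  set cm := c + s₂ • n₂ with hcm'
  have hq : 0 < -(cm (Fin.last d)) := by linarith
  have ec0 : Exposes Q F ((-(cm (Fin.last d))) • cp + (cp (Fin.last d)) • cm)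
      ((-(cm (Fin.last d))) * (b + s₁ * b₁) + (cp (Fin.last d)) * (b + s₂ * b₂)) := by
    have h := exposes_add (exposes_smul hq ecp) (exposes_smul hcp ecm)
    rwa [Set.inter_self] at h
  have hc0last : ((-(cm (Fin.last d))) • cp + (cp (Fin.last d)) • cm) (Fin.last d) = 0 := by
    simp only [Pi.add_apply, Pi.smul_apply, smul_eq_mul]
    ring
  exact ⟨preserved_of_zero hc0last ec0, pdim_proj_eq hne (not_mem_vs ecp (ne_of_gt hcp))⟩

lemma facet_above {d : ℕ} {Q : Set (Fin (d+1) → ℝ)} (S : Finset (Fin (d+1) → ℝ))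
    (hS : Q = convexHull ℝ (S : Set (Fin (d+1) → ℝ))) (hdQ : pdim Q = d + 1)
    {F : Set (Fin (d+1) → ℝ)} {c : Fin (d+1) → ℝ} {b : ℝ}
    (hex : Exposes Q F c b) (hne : F.Nonempty) (hc : c (Fin.last d) ≠ 0) :
    ∃ G c', IsFacetOf G Q ∧ IsOuterNormal Q G c' ∧ F ⊆ G ∧
      c' (Fin.last d) = c (Fin.last d) := by
  have hbS : ∀ s ∈ S, c ⬝ᵥ s ≤ b := fun s hs =>
    hex.1 s (by rw [hS]; exact subset_convexHull ℝ _ hs)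
  have hF : F = convexHull ℝ ((S.filter fun s => c ⬝ᵥ s = b) : Set (Fin (d+1) → ℝ)) := by
    rw [hex.2, hS, face_conv S c b hbS]
  have hTne : (S.filter fun s => c ⬝ᵥ s = b).Nonempty := by
    rw [Finset.nonempty_iff_ne_empty]
    intro h
    rw [h] at hF
    simp only [Finset.coe_empty, convexHull_empty] at hF
    exact hne.ne_empty hF
  obtain ⟨G, c', hGf, hGo, hsub, hlast⟩ :=
    grow S Q hS hdQ (S \ S.filter fun s => c ⬝ᵥ s = b).card c b hTne hbS hc le_rfl
  exact ⟨G, c', hGf, hGo, by rw [hF]; exact hsub, hlast⟩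

end PLAux

open Matrix in
theorem projection_lemma (d : ℕ) (Q : Set (Fin (d + 1) → ℝ))
    (hQ : IsPolytope Q) (hdQ : pdim Q = d + 1)
    (F : Set (Fin (d + 1) → ℝ)) (hF : IsFaceOf F Q) (hFne : F.Nonempty) (hFpr : F ≠ Q) :
    (StrictlyPreservedFace Q F ↔
      ∃ F₁ F₂ : Set (Fin (d + 1) → ℝ),
        F ⊆ F₁ ∧ F ⊆ F₂ ∧ IsUpperFacet F₁ Q ∧ IsLowerFacet F₂ Q) ∧
    ((PreservedFace Q F ∧ ¬ StrictlyPreservedFace Q F) ↔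
      ∀ G : Set (Fin (d + 1) → ℝ), IsFacetOf G Q → F ⊆ G → IsVerticalFacet G Q) := by
  classical
  obtain ⟨S, hS⟩ := hQ
  obtain ⟨c, b, hcb, hcF⟩ := hF
  have hex : PLAux.Exposes Q F c b := ⟨hcb, hcF⟩
  have h1 : StrictlyPreservedFace Q F ↔
      ∃ F₁ F₂ : Set (Fin (d + 1) → ℝ),
        F ⊆ F₁ ∧ F ⊆ F₂ ∧ IsUpperFacet F₁ Q ∧ IsLowerFacet F₂ Q := by
    constructor
    · rintro ⟨hpres, hdim⟩
      obtain ⟨c₀, b₀, hex₀, h₀last⟩ := PLAux.exposer_of_preserved hpres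
      have he : (Pi.single (Fin.last d) (1:ℝ) : Fin (d+1) → ℝ) ∉ vectorSpan ℝ F := by
        intro he
        exact PLAux.pdim_proj_ne hFne he hdim
      obtain ⟨w, hwU, hwe⟩ := PLAux.exists_w he
      have hwlast : w (Fin.last d) = 1 := by
        rwa [dotProduct_single, mul_one] at hwe
      obtain ⟨t₀, ht₀F⟩ := hFne
      have hwT : ∀ s ∈ S.filter (fun s => c₀ ⬝ᵥ s = b₀), w ⬝ᵥ s = w ⬝ᵥ t₀ := by
        intro s hs
        obtain ⟨hsS, hsb⟩ := Finset.mem_filter.1 hs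
        have hsF : s ∈ F := by
          rw [hex₀.2]
          exact ⟨by rw [hS]; exact subset_convexHull ℝ _ hsS, hsb⟩
        have hsV : s - t₀ ∈ vectorSpan ℝ F := by
          have hv := vsub_mem_vectorSpan ℝ hsF ht₀F
          rwa [vsub_eq_sub] at hv
        have h0 : w ⬝ᵥ (s - t₀) = 0 := hwU _ hsV
        rw [dotProduct_sub] at h0
        linarith
      obtain ⟨t₁, ht₁, hexp₁⟩ := PLAux.exposes_perturbed S hS hex₀ hwT
      have hl₁ : (c₀ + t₁ • w) (Fin.last d) = t₁ := by
        simp only [Pi.add_apply, Pi.smul_apply, smul_eq_mul, h₀last, hwlast]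
        ring
      obtain ⟨G₁, c₁, hG₁f, hG₁o, hsub₁, hc₁l⟩ :=
        PLAux.facet_above S hS hdQ hexp₁ ⟨t₀, ht₀F⟩ (by rw [hl₁]; exact ht₁.ne')
      have hwT' : ∀ s ∈ S.filter (fun s => c₀ ⬝ᵥ s = b₀), (-w) ⬝ᵥ s = -(w ⬝ᵥ t₀) := by
        intro s hs
        rw [neg_dotProduct, hwT s hs]
      obtain ⟨t₂, ht₂, hexp₂⟩ := PLAux.exposes_perturbed S hS hex₀ hwT'
      have hl₂ : (c₀ + t₂ • (-w)) (Fin.last d) = -t₂ := by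
        simp only [Pi.add_apply, Pi.smul_apply, Pi.neg_apply, smul_eq_mul, h₀last, hwlast]
        ring
      obtain ⟨G₂, c₂, hG₂f, hG₂o, hsub₂, hc₂l⟩ :=
        PLAux.facet_above S hS hdQ hexp₂ ⟨t₀, ht₀F⟩
          (by rw [hl₂]; exact neg_ne_zero.2 ht₂.ne')
      refine ⟨G₁, G₂, hsub₁, hsub₂, ⟨hG₁f, c₁, hG₁o, ?_⟩, ⟨hG₂f, c₂, hG₂o, ?_⟩⟩
      · rw [hc₁l, hl₁]; exact ht₁
      · rw [hc₂l, hl₂]; linarith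
    · rintro ⟨F₁, F₂, hs1, hs2, hu, hl⟩
      exact PLAux.strict_of_ul hex hFne hs1 hs2 hu hl
  refine ⟨h1, ?_, ?_⟩
  · rintro ⟨hpres, hnst⟩ G hG hFG
    refine ⟨hG, ?_⟩
    intro nn hno
    by_contra hnz
    obtain ⟨c₀, b₀, hex₀, h₀last⟩ := PLAux.exposer_of_preserved hpres
    obtain ⟨bn, hbn, hGn⟩ := hno
    have hwT : ∀ s ∈ S.filter (fun s => c₀ ⬝ᵥ s = b₀), (-nn) ⬝ᵥ s = -bn := by
      intro s hs
      obtain ⟨hsS, hsb⟩ := Finset.mem_filter.1 hs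
      have hsF : s ∈ F := by
        rw [hex₀.2]
        exact ⟨by rw [hS]; exact subset_convexHull ℝ _ hsS, hsb⟩
      have hsG : s ∈ G := hFG hsF
      rw [hGn] at hsG
      have hval : nn ⬝ᵥ s = bn := hsG.2
      rw [neg_dotProduct, hval]
    obtain ⟨t, ht, hexp⟩ := PLAux.exposes_perturbed S hS hex₀ hwT
    have hlast : (c₀ + t • (-nn)) (Fin.last d) = -(t * nn (Fin.last d)) := by
      simp only [Pi.add_apply, Pi.smul_apply, Pi.neg_apply, smul_eq_mul, h₀last]
      ring
    rcases lt_trichotomy (nn (Fin.last d)) 0 with hsgn | hsgn | hsgn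
    · -- G is a lower facet, build an upper facet containing F
      have hpos : 0 < (c₀ + t • (-nn)) (Fin.last d) := by
        rw [hlast]; nlinarith
      obtain ⟨G₁, c₁, hG₁f, hG₁o, hFsub, hc₁l⟩ :=
        PLAux.facet_above S hS hdQ hexp hFne (ne_of_gt hpos)
      exact hnst (PLAux.strict_of_ul hex hFne hFsub hFG
        ⟨hG₁f, c₁, hG₁o, by rw [hc₁l]; exact hpos⟩
        ⟨hG, nn, ⟨bn, hbn, hGn⟩, hsgn⟩)
    · exact hnz hsgn
    · -- G is an upper facet, build a lower facet containing F
      have hneg : (c₀ + t • (-nn)) (Fin.last d) < 0 := by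
        rw [hlast]; nlinarith
      obtain ⟨G₂, c₂, hG₂f, hG₂o, hFsub, hc₂l⟩ :=
        PLAux.facet_above S hS hdQ hexp hFne (ne_of_lt hneg)
      exact hnst (PLAux.strict_of_ul hex hFne hFG hFsub
        ⟨hG, nn, ⟨bn, hbn, hGn⟩, hsgn⟩
        ⟨hG₂f, c₂, hG₂o, by rw [hc₂l]; exact hneg⟩)
  · intro hall
    constructor
    · rcases lt_trichotomy (c (Fin.last d)) 0 with hsgn | hsgn | hsgn
      · exfalso
        obtain ⟨G, c', hGf, hGo, hFG, hc'l⟩ :=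
          PLAux.facet_above S hS hdQ hex hFne (ne_of_lt hsgn)
        have h0 := (hall G hGf hFG).2 c' hGo
        rw [hc'l] at h0
        exact (ne_of_lt hsgn) h0
      · exact PLAux.preserved_of_zero hsgn hex
      · exfalso
        obtain ⟨G, c', hGf, hGo, hFG, hc'l⟩ :=
          PLAux.facet_above S hS hdQ hex hFne (ne_of_gt hsgn)
        have h0 := (hall G hGf hFG).2 c' hGo
        rw [hc'l] at h0
        exact (ne_of_gt hsgn) h0
    · intro hstrict
      obtain ⟨F₁, F₂, hs1, hs2, hu, hl⟩ := h1.1 hstrict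
      obtain ⟨hf1, n₁, hn₁o, hn₁pos⟩ := hu
      have h0 := (hall F₁ hf1 hs1).2 n₁ hn₁o
      linarith

end
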